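/- Let G be a graph with Tr(G) = Δ(G) + 1, where Δ(G) is the maximum degree of G. If Tr(G) is even then Tr₂(G) = Tr(G)/2, and if Tr(G) is odd then Tr₂(G) = (Tr(G)+1)/2. -/
import Mathlib


open SimpleGraph

def TwoTransPart {V : Type*} (G : SimpleGraph V) (k : ℕ) (P : Fin k → Set V) : Prop :=
  (∀ i, (P i).Nonempty) ∧ (∀ v, ∃! i, v ∈ P i) ∧
    ∀ i j : Fin k, i < j → ∀ v ∈ P j,
      ∃ u w, u ∈ P i ∧ w ∈ P i ∧ u ≠ w ∧ G.Adj u v ∧ G.Adj w v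

/-- The 2-transitivity `Tr₂(G)`: the maximum size of a 2-transitive partition of `G`. -/
noncomputable def tr2 {V : Type*} (G : SimpleGraph V) : ℕ :=
  sSup {k | ∃ P : Fin k → Set V, TwoTransPart G k P}

def TransPart {V : Type*} (G : SimpleGraph V) (k : ℕ) (P : Fin k → Set V) : Prop :=
  (∀ i, (P i).Nonempty) ∧ (∀ v, ∃! i, v ∈ P i) ∧
    ∀ i j : Fin k, i < j → ∀ v ∈ P j, ∃ u ∈ P i, G.Adj u v

/-- The transitivity `Tr(G)`: the maximum size of a transitive partition of `G`. -/
noncomputable def tr {V : Type*} (G : SimpleGraph V) : ℕ :=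
  sSup {k | ∃ P : Fin k → Set V, TransPart G k P}

lemma part_eq {V : Type*} {k : ℕ} {P : Fin k → Set V}
    (hP : ∀ v : V, ∃! i : Fin k, v ∈ P i)
    {x : V} {a b : Fin k} (ha : x ∈ P a) (hb : x ∈ P b) : a = b := by
  obtain ⟨c, _, hc⟩ := hP x
  rw [hc a ha, hc b hb]

lemma two_upper {V : Type*} [Fintype V] (G : SimpleGraph V) [DecidableRel G.Adj]
    {k : ℕ} {P : Fin k → Set V} (hP : TwoTransPart G k P) :
    k ≤ G.maxDegree / 2 + 1 := by
  rcases Nat.lt_or_ge k 2 with hk | hk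
  · omega
  · have hklt : k - 1 < k := by omega
    set j : Fin k := ⟨k - 1, hklt⟩ with hj
    obtain ⟨v, hv⟩ := hP.1 j
    have key : ∀ i : Fin (k - 1), ∃ u w,
        u ∈ P ⟨(i : ℕ), by omega⟩ ∧ w ∈ P ⟨(i : ℕ), by omega⟩ ∧ u ≠ w ∧ G.Adj u v ∧ G.Adj w v := by
      intro i
      refine hP.2.2 ⟨(i : ℕ), by omega⟩ j ?_ v hv
      have := i.2
      simp only [Fin.lt_def, hj]
      omega
    choose u w hu hw hne hadju hadjw using key
    have hcard : (Finset.univ : Finset (Fin (k - 1) × Bool)).card ≤ (G.neighborFinset v).card := by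
      apply Finset.card_le_card_of_injOn (fun p => if p.2 then u p.1 else w p.1)
      · intro p _
        simp only [SimpleGraph.mem_neighborFinset]
        cases hp : p.2 <;> simp [hp]
        · exact (hadjw p.1).symm
        · exact (hadju p.1).symm
      · intro p _ q _ heq
        replace heq : (if p.2 then u p.1 else w p.1) = (if q.2 then u q.1 else w q.1) := heq
        have hidx : p.1 = q.1 := by
          have h1 : (if p.2 then u p.1 else w p.1) ∈ P ⟨(p.1 : ℕ), by omega⟩ := by
            cases hp : p.2 <;> simp [hp]
            exacts [hw p.1, hu p.1]
          have h2 : (if q.2 then u q.1 else w q.1) ∈ P ⟨(q.1 : ℕ), by omega⟩ := by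
            cases hq : q.2 <;> simp [hq]
            exacts [hw q.1, hu q.1]
          rw [← heq] at h2
          have heqk := part_eq hP.2.1 h1 h2
          have hval : ((p.1 : ℕ)) = (q.1 : ℕ) := by simpa using heqk
          exact Fin.ext hval
        have hb : p.2 = q.2 := by
          by_contra hb
          rw [show p.1 = q.1 from hidx] at heq
          cases hp : p.2 <;> cases hq : q.2 <;> simp [hp, hq] at hb heq ⊢
          · exact (hne q.1) heq.symm
          · exact (hne q.1) heq
        exact Prod.ext hidx hb
    have hdeg : 2 * (k - 1) ≤ G.degree v := by
      have : (Finset.univ : Finset (Fin (k - 1) × Bool)).card = (k - 1) * 2 := by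
        simp [Finset.card_univ]
      rw [SimpleGraph.degree]
      omega
    have := G.degree_le_maxDegree v
    omega

lemma merge_part {V : Type*} {G : SimpleGraph V} {n : ℕ} {Q : Fin n → Set V}
    (hQ : TransPart G n Q) :
    TwoTransPart G ((n + 1) / 2)
      (fun j => {v | ∃ i : Fin n, v ∈ Q i ∧ (i : ℕ) / 2 = (j : ℕ)}) := by
  refine ⟨?_, ?_, ?_⟩
  · intro j
    have h2j : 2 * (j : ℕ) < n := by have := j.2; omega
    obtain ⟨v, hv⟩ := hQ.1 ⟨2 * (j : ℕ), h2j⟩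
    exact ⟨v, ⟨2 * (j : ℕ), h2j⟩, hv, by show 2 * (j : ℕ) / 2 = (j : ℕ); omega⟩
  · intro v
    obtain ⟨i, hi, hiu⟩ := hQ.2.1 v
    refine ⟨⟨(i : ℕ) / 2, by have := i.2; omega⟩, ⟨i, hi, rfl⟩, ?_⟩
    rintro y ⟨i', hi', hdiv⟩
    have hii : i' = i := hiu i' hi'
    subst hii
    exact Fin.ext (by simpa using hdiv.symm)
  · intro a b hab v hv
    obtain ⟨i', hi', hdiv⟩ := hv
    have hab' : (a : ℕ) < (b : ℕ) := hab
    have hi'2 := i'.2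
    have h1 : 2 * (a : ℕ) < n := by omega
    have h2 : 2 * (a : ℕ) + 1 < n := by omega
    obtain ⟨u, hu, hadju⟩ := hQ.2.2 ⟨2 * (a : ℕ), h1⟩ i' (by simp only [Fin.lt_def]; omega) v hi'
    obtain ⟨w, hw, hadjw⟩ := hQ.2.2 ⟨2 * (a : ℕ) + 1, h2⟩ i' (by simp only [Fin.lt_def]; omega) v hi'
    refine ⟨u, w, ⟨_, hu, by show 2 * (a : ℕ) / 2 = (a : ℕ); omega⟩,
      ⟨_, hw, by show (2 * (a : ℕ) + 1) / 2 = (a : ℕ); omega⟩, ?_, hadju, hadjw⟩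
    intro huw
    have := part_eq hQ.2.1 (huw ▸ hu) hw
    have := congrArg Fin.val this
    simp at this

theorem stmt6 {V : Type*} [Fintype V] (G : SimpleGraph V) [DecidableRel G.Adj]
    (h : tr G = G.maxDegree + 1) :
    (Even (tr G) → tr2 G = tr G / 2) ∧ (Odd (tr G) → tr2 G = (tr G + 1) / 2) := by
  have hSbdd : BddAbove {k | ∃ P : Fin k → Set V, TransPart G k P} := by
    refine ⟨Fintype.card V, ?_⟩
    rintro k ⟨P, hP⟩
    have hinj : Function.Injective (fun i : Fin k => (hP.1 i).choose) := by
      intro a b hab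
      have hab' : (hP.1 a).choose = (hP.1 b).choose := hab
      have hmb : (hP.1 a).choose ∈ P b := by rw [hab']; exact (hP.1 b).choose_spec
      exact part_eq hP.2.1 (hP.1 a).choose_spec hmb
    simpa using Fintype.card_le_of_injective _ hinj
  have hSne : {k | ∃ P : Fin k → Set V, TransPart G k P}.Nonempty := by
    by_cases hV : Nonempty V
    · refine ⟨1, fun _ => Set.univ, fun _ => Set.univ_nonempty, fun v => ⟨0, trivial, fun y _ => Subsingleton.elim _ _⟩, ?_⟩
      intro i j hij
      have := i.2; have := j.2
      have := Fin.lt_def.mp hij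
      omega
    · refine ⟨0, fun i => i.elim0, fun i => i.elim0, fun v => absurd ⟨v⟩ hV, fun i => i.elim0⟩
  have hmem : tr G ∈ {k | ∃ P : Fin k → Set V, TransPart G k P} :=
    Nat.sSup_mem hSne hSbdd
  obtain ⟨Q, hQ⟩ := hmem
  have h2 := merge_part hQ
  set m := (tr G + 1) / 2 with hm
  have hmm : m ∈ {k | ∃ P : Fin k → Set V, TwoTransPart G k P} := ⟨_, h2⟩
  have hub : ∀ x ∈ {k | ∃ P : Fin k → Set V, TwoTransPart G k P}, x ≤ m := by
    rintro x ⟨P, hP⟩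
    have := two_upper G hP
    omega
  have htr2 : tr2 G = m :=
    le_antisymm (csSup_le ⟨m, hmm⟩ hub) (le_csSup ⟨m, hub⟩ hmm)
  constructor
  · rintro ⟨c, hc⟩
    omega
  · rintro ⟨c, hc⟩
    omega
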